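/- Let E : (0,1) → ℝ be locally absolutely continuous, nonnegative, and suppose there exist constants C > 0 and n ≥ 1 such that E'(r) ≥ −C E(r) + ((n−1)/r) E(r) + 2 F(r) for a.e. r, where F(r) ≥ 0, and let H : (0,1) → (0,∞) be locally absolutely continuous with |H'(r) − (n/r)H(r) − 2E(r)| ≤ C·H(r) (using E(r) = ∫_{∂B_r} u ⟨A∇u, ν⟩, assumed equal to both the bulk energy and the boundary flux). If additionally 2 H(r) F(r) ≥ 2 E(r)², then I(r) = r E(r)/H(r) satisfies I'(r) ≥ −C' I(r) for a.e. r, with C' depending only on C; hence r ↦ e^{C'r} I(r) is nondecreasing on (0,1). -/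

import Mathlib

open MeasureTheory Set
open intervalIntegral

noncomputable section

lemma parts_aux (a b : ℝ) (hab : a ≤ b) (φ φ' f f' : ℝ → ℝ)
    (hφ : ∀ x, HasDerivAt φ (φ' x) x) (hφ'c : Continuous φ')
    (hf'int : IntervalIntegrable f' volume a b)
    (hftc : ∀ x ∈ Icc a b, f x - f a = ∫ s in a..x, f' s) :
    φ b * f b - φ a * f a = ∫ t in a..b, (φ' t * f t + φ t * f' t) := by
  have huIcc : uIcc a b = Icc a b := uIcc_of_le hab
  -- continuity of f on Icc a b
  have hfc : ContinuousOn f (Icc a b) := by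
    have h1 : ContinuousOn (fun x => f a + ∫ s in a..x, f' s) (Icc a b) := by
      exact continuousOn_const.add
        (by simpa [huIcc] using continuousOn_primitive_interval' hf'int (by simp [huIcc, hab]))
    refine h1.congr fun x hx => ?_
    have := hftc x hx
    linarith
  set ν : Measure ℝ := volume.restrict (Ioc a b) with hν
  have hf'ν : Integrable f' ν := (intervalIntegrable_iff_integrableOn_Ioc_of_le hab).mp hf'int
  have hφ'ν : Integrable φ' ν := hφ'c.integrableOn_Ioc
  have hS : MeasurableSet {p : ℝ × ℝ | p.2 ≤ p.1} :=
    (isClosed_le continuous_snd continuous_fst).measurableSet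
  set g : ℝ × ℝ → ℝ := ({p : ℝ × ℝ | p.2 ≤ p.1}).indicator (fun p => φ' p.1 * f' p.2) with hg
  have hgint : Integrable g (ν.prod ν) := (hφ'ν.mul_prod hf'ν).indicator hS
  have hφint : IntervalIntegrable φ' volume a b := hφ'c.intervalIntegrable a b
  -- inner integral in s for fixed t
  have inner_t : ∀ t ∈ Ioc a b, (∫ s, g (t, s) ∂ν) = φ' t * (f t - f a) := by
    intro t ht
    have h1 : (fun s => g (t, s)) = (Iic t).indicator (fun s => φ' t * f' s) := by
      ext s
      by_cases h : s ≤ t <;> simp [hg, indicator, h]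
    rw [h1, MeasureTheory.integral_indicator measurableSet_Iic, hν,
      Measure.restrict_restrict measurableSet_Iic]
    have : Iic t ∩ Ioc a b = Ioc a t := by
      ext s; simp only [mem_inter_iff, mem_Iic, mem_Ioc]
      exact ⟨fun ⟨h1, h2, h3⟩ => ⟨h2, h1⟩, fun ⟨h1, h2⟩ => ⟨h2, h1, h2.trans ht.2⟩⟩
    rw [this, MeasureTheory.integral_const_mul, ← intervalIntegral.integral_of_le ht.1.le,
      ← hftc t ⟨ht.1.le, ht.2⟩]
  -- inner integral in t for fixed s
  have inner_s : ∀ s ∈ Ioc a b, (∫ t, g (t, s) ∂ν) = (φ b - φ s) * f' s := by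
    intro s hs
    have h1 : (fun t => g (t, s)) = (Ici s).indicator (fun t => φ' t * f' s) := by
      ext t
      by_cases h : s ≤ t <;> simp [hg, indicator, h]
    rw [h1, MeasureTheory.integral_indicator measurableSet_Ici, hν,
      Measure.restrict_restrict measurableSet_Ici]
    have : Ici s ∩ Ioc a b = Icc s b := by
      ext t; simp only [mem_inter_iff, mem_Ici, mem_Icc, mem_Ioc]
      exact ⟨fun ⟨h1, _, h3⟩ => ⟨h1, h3⟩, fun ⟨h1, h2⟩ => ⟨h1, hs.1.trans_le h1, h2⟩⟩
    rw [this, MeasureTheory.integral_Icc_eq_integral_Ioc, MeasureTheory.integral_mul_const,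
      ← intervalIntegral.integral_of_le hs.2]
    have hφb : (∫ t in s..b, φ' t) = φ b - φ s :=
      integral_eq_sub_of_hasDerivAt (fun x _ => hφ x) (hφ'c.intervalIntegrable s b)
    rw [hφb]
  -- Fubini
  have key : (∫ t in a..b, φ' t * (f t - f a)) = ∫ s in a..b, (φ b - φ s) * f' s := by
    rw [intervalIntegral.integral_of_le hab, intervalIntegral.integral_of_le hab]
    have swap := MeasureTheory.integral_integral_swap (f := fun t s => g (t, s))
      (μ := ν) (ν := ν) (by exact hgint)
    calc ∫ t in Ioc a b, φ' t * (f t - f a)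
        = ∫ t, (∫ s, g (t, s) ∂ν) ∂ν := by
          rw [hν]
          refine (setIntegral_congr_fun measurableSet_Ioc fun t ht => ?_).symm
          exact inner_t t ht
      _ = ∫ s, (∫ t, g (t, s) ∂ν) ∂ν := swap
      _ = ∫ s in Ioc a b, (φ b - φ s) * f' s := by
          rw [hν]
          exact setIntegral_congr_fun measurableSet_Ioc fun s hs => inner_s s hs
  -- integrabilities
  have hφ'f : IntervalIntegrable (fun t => φ' t * f t) volume a b := by
    exact (hφ'c.intervalIntegrable a b).mul_continuousOn (by rwa [huIcc])
  have hφcont : Continuous φ := by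
    have : Differentiable ℝ φ := fun x => (hφ x).differentiableAt
    exact this.continuous
  have hφf' : IntervalIntegrable (fun t => φ t * f' t) volume a b :=
    hf'int.continuousOn_mul hφcont.continuousOn
  have hfb : f b - f a = ∫ s in a..b, f' s := hftc b ⟨hab, le_rfl⟩
  have e1 : (∫ t in a..b, φ' t * f t)
      = (∫ t in a..b, φ' t * (f t - f a)) + f a * (φ b - φ a) := by
    have hint1 : IntervalIntegrable (fun t => φ' t * (f t - f a)) volume a b := by
      apply IntervalIntegrable.mul_continuousOn (hφ'c.intervalIntegrable a b)
      exact (by rwa [huIcc] : ContinuousOn f (uIcc a b)).sub continuousOn_const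
    have hint2 : IntervalIntegrable (fun t => φ' t * f a) volume a b :=
      (hφ'c.intervalIntegrable a b).mul_const _
    rw [intervalIntegral.integral_congr
      (g := fun t => φ' t * (f t - f a) + φ' t * f a) (fun t _ => by ring),
      intervalIntegral.integral_add hint1 hint2, intervalIntegral.integral_mul_const,
      integral_eq_sub_of_hasDerivAt (fun x _ => hφ x) hφint]
    ring
  have e2 : (∫ s in a..b, (φ b - φ s) * f' s)
      = φ b * (f b - f a) - ∫ s in a..b, φ s * f' s := by
    rw [intervalIntegral.integral_congr
      (g := fun s => φ b * f' s - φ s * f' s) (fun s _ => by ring),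
      intervalIntegral.integral_sub (hf'int.const_mul (φ b)) hφf',
      intervalIntegral.integral_const_mul, ← hfb]
  rw [intervalIntegral.integral_add hφ'f hφf', e1, key, e2]
  ring

lemma pw_ineq (C n t x Ha mu e h e' h' f : ℝ) (ht : 0 < t) (hx : 0 < x)
    (hHa : 0 < Ha) (hmu : 0 ≤ mu) (he : 0 ≤ e) (hh : 0 < h)
    (hE' : e' ≥ -C * e + ((n - 1) / t) * e + 2 * f)
    (hH' : |h' - (n / t) * h - 2 * e| ≤ C * h)
    (hCS : 2 * h * f ≥ 2 * e ^ 2) :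
    Ha * ((x * (2 * C * t + 1)) * e + (x * t) * e') - mu * h'
      ≥ (C + n / t + 2 * e / h) * (Ha * ((x * t) * e) - mu * h) := by
  have hH'le : h' ≤ (n / t) * h + 2 * e + C * h := by
    have := (abs_le.mp hH').2; linarith
  have hf : e ^ 2 / h ≤ f := by rw [div_le_iff₀ hh]; nlinarith
  have hE'2 : -C * e + ((n - 1) / t) * e + 2 * (e ^ 2 / h) ≤ e' := by nlinarith
  have h1 : Ha * (x * t) * (-C * e + ((n - 1) / t) * e + 2 * (e ^ 2 / h))
      ≤ Ha * (x * t) * e' := mul_le_mul_of_nonneg_left hE'2 (by positivity)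
  have h2 : mu * h' ≤ mu * ((n / t) * h + 2 * e + C * h) := mul_le_mul_of_nonneg_left hH'le hmu
  have key : Ha * ((x * (2 * C * t + 1)) * e) + Ha * (x * t) * (-C * e + ((n - 1) / t) * e + 2 * (e ^ 2 / h))
      - mu * ((n / t) * h + 2 * e + C * h)
      = (C + n / t + 2 * e / h) * (Ha * ((x * t) * e) - mu * h) := by
    field_simp
    ring
  nlinarith [h1, h2, key]

lemma contAt_of_ftc (E E' : ℝ → ℝ)
    (hint : ∀ a ∈ Ioo (0:ℝ) 1, ∀ b ∈ Ioo (0:ℝ) 1, IntervalIntegrable E' volume a b)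
    (hftc : ∀ a ∈ Ioo (0:ℝ) 1, ∀ b ∈ Ioo (0:ℝ) 1, E b - E a = ∫ r in a..b, E' r) :
    ∀ x ∈ Ioo (0:ℝ) 1, ContinuousAt E x := by
  intro x hx
  obtain ⟨hx0, hx1⟩ := hx
  set α := x / 2 with hαdef
  set β := (x + 1) / 2 with hβdef
  have hα : α ∈ Ioo (0:ℝ) 1 := ⟨by simp [hαdef]; linarith, by simp [hαdef]; linarith⟩
  have hβ : β ∈ Ioo (0:ℝ) 1 := ⟨by simp [hβdef]; linarith, by simp [hβdef]; linarith⟩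
  have hαβ : α ≤ β := by simp [hαdef, hβdef]; linarith
  have hsub : Icc α β ⊆ Ioo (0:ℝ) 1 := fun y hy => ⟨lt_of_lt_of_le hα.1 hy.1, lt_of_le_of_lt hy.2 hβ.2⟩
  have huIcc : uIcc α β = Icc α β := uIcc_of_le hαβ
  have h1 : ContinuousOn (fun y => E α + ∫ s in α..y, E' s) (Icc α β) := by
    refine continuousOn_const.add ?_
    have := continuousOn_primitive_interval' (hint α hα β hβ) (a := α) (by rw [huIcc]; exact ⟨le_rfl, hαβ⟩)
    rwa [huIcc] at this
  have h2 : ContinuousOn E (Icc α β) := by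
    refine h1.congr fun y hy => ?_
    have := hftc α hα y (hsub hy)
    linarith
  exact h2.continuousAt (Icc_mem_nhds (by simp [hαdef]; linarith) (by simp [hβdef]; linarith))

lemma freq_mono (C n : ℝ) (hC : 0 < C) (hn : 1 ≤ n)
    (E E' F H H' : ℝ → ℝ)
    (hE_nonneg : ∀ r ∈ Set.Ioo (0 : ℝ) 1, 0 ≤ E r)
    (hF_nonneg : ∀ r ∈ Set.Ioo (0 : ℝ) 1, 0 ≤ F r)
    (hH_pos : ∀ r ∈ Set.Ioo (0 : ℝ) 1, 0 < H r)
    (hE_int : ∀ a ∈ Set.Ioo (0 : ℝ) 1, ∀ b ∈ Set.Ioo (0 : ℝ) 1,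
      IntervalIntegrable E' volume a b)
    (hE_ftc : ∀ a ∈ Set.Ioo (0 : ℝ) 1, ∀ b ∈ Set.Ioo (0 : ℝ) 1,
      E b - E a = ∫ r in a..b, E' r)
    (hH_int : ∀ a ∈ Set.Ioo (0 : ℝ) 1, ∀ b ∈ Set.Ioo (0 : ℝ) 1,
      IntervalIntegrable H' volume a b)
    (hH_ftc : ∀ a ∈ Set.Ioo (0 : ℝ) 1, ∀ b ∈ Set.Ioo (0 : ℝ) 1,
      H b - H a = ∫ r in a..b, H' r)
    (hE' : ∀ᵐ r ∂(volume.restrict (Set.Ioo (0 : ℝ) 1)),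
      E' r ≥ -C * E r + ((n - 1) / r) * E r + 2 * F r)
    (hH' : ∀ᵐ r ∂(volume.restrict (Set.Ioo (0 : ℝ) 1)),
      |H' r - (n / r) * H r - 2 * E r| ≤ C * H r)
    (hCS : ∀ r ∈ Set.Ioo (0 : ℝ) 1, 2 * H r * F r ≥ 2 * (E r) ^ 2) :
    MonotoneOn (fun r => Real.exp (2 * C * r) * (r * E r / H r)) (Set.Ioo (0 : ℝ) 1) := by
  have hEc := contAt_of_ftc E E' hE_int hE_ftc
  have hHc := contAt_of_ftc H H' hH_int hH_ftc
  intro a ha b hb hab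
  rcases eq_or_lt_of_le hab with rfl | hab'
  · exact le_rfl
  simp only
  set φ : ℝ → ℝ := fun t => Real.exp (2 * C * t) * t with hφdef
  set φ' : ℝ → ℝ := fun t => Real.exp (2 * C * t) * (2 * C * t + 1) with hφ'def
  have hφd : ∀ y : ℝ, HasDerivAt φ (φ' y) y := by
    intro y
    have h1 : HasDerivAt (fun s : ℝ => Real.exp (2 * C * s))
        (Real.exp (2 * C * y) * (2 * C * 1)) y :=
      ((hasDerivAt_id y).const_mul (2 * C)).exp
    have h2 := h1.mul (hasDerivAt_id y)
    refine HasDerivAt.congr_deriv (f := φ) h2 ?_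
    simp only [hφ'def, id_eq]
    ring
  have hφcont : Continuous φ := by
    rw [hφdef]
    exact (Real.continuous_exp.comp (continuous_const.mul continuous_id)).mul continuous_id
  have hφ'c : Continuous φ' := by
    rw [hφ'def]
    exact (Real.continuous_exp.comp (continuous_const.mul continuous_id)).mul
      ((continuous_const.mul continuous_id).add continuous_const)
  have hsub : Icc a b ⊆ Ioo (0:ℝ) 1 := fun y hy => ⟨ha.1.trans_le hy.1, lt_of_le_of_lt hy.2 hb.2⟩
  have hEcont : ContinuousOn E (Icc a b) := fun y hy => (hEc y (hsub hy)).continuousWithinAt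
  have hHcont : ContinuousOn H (Icc a b) := fun y hy => (hHc y (hsub hy)).continuousWithinAt
  have hHapos : 0 < H a := hH_pos a ha
  have hφa_pos : 0 < φ a := by
    simp only [hφdef]; exact mul_pos (Real.exp_pos _) ha.1
  set μ : ℝ := φ a * E a with hμdef
  have hμ : 0 ≤ μ := mul_nonneg hφa_pos.le (hE_nonneg a ha)
  set P : ℝ → ℝ := fun y => H a * (φ y * E y) - μ * H y with hPdef
  set p : ℝ → ℝ := fun t => H a * (φ' t * E t + φ t * E' t) - μ * H' t with hpdef
  -- integrability on a..b
  have huIcc : uIcc a b = Icc a b := uIcc_of_le hab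
  have hint_φ'E : IntervalIntegrable (fun t => φ' t * E t) volume a b := by
    apply ContinuousOn.intervalIntegrable
    rw [huIcc]
    exact (hφ'c.continuousOn).mul hEcont
  have hint_φE' : IntervalIntegrable (fun t => φ t * E' t) volume a b :=
    (hE_int a ha b hb).continuousOn_mul hφcont.continuousOn
  have hi1b : IntervalIntegrable (fun t => φ' t * E t + φ t * E' t) volume a b :=
    hint_φ'E.add hint_φE'
  have hi2b : IntervalIntegrable H' volume a b := hH_int a ha b hb
  have hpintb : IntervalIntegrable p volume a b := by
    rw [hpdef]
    exact (hi1b.const_mul (H a)).sub (hi2b.const_mul μ)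
  -- FTC for P
  have hPa : P a = 0 := by rw [hPdef, hμdef]; ring
  have hPftc : ∀ y ∈ Icc a b, P y = ∫ t in a..y, p t := by
    intro y hy
    have hy1 : y ∈ Ioo (0:ℝ) 1 := hsub hy
    have hsubset : uIcc a y ⊆ uIcc a b := by
      rw [huIcc, uIcc_of_le hy.1]
      exact Icc_subset_Icc le_rfl hy.2
    have hparts := parts_aux a y hy.1 φ φ' E E' hφd hφ'c (hE_int a ha y hy1)
      (fun z hz => hE_ftc a ha z (hsub ⟨hz.1, hz.2.trans hy.2⟩))
    have hH1 := hH_ftc a ha y hy1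
    have hi1 : IntervalIntegrable (fun t => φ' t * E t + φ t * E' t) volume a y :=
      hi1b.mono_set hsubset
    have hi2 : IntervalIntegrable H' volume a y := hH_int a ha y hy1
    have e1 : P y = H a * (φ y * E y - φ a * E a) - μ * (H y - H a) := by
      rw [hPdef, hμdef]; ring
    rw [e1, hparts, hH1, ← intervalIntegral.integral_const_mul,
      ← intervalIntegral.integral_const_mul,
      ← intervalIntegral.integral_sub (hi1.const_mul _) (hi2.const_mul _)]
  -- continuity of P and v on Ioo 0 1
  have hPcont : ContinuousOn P (Ioo (0:ℝ) 1) := by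
    rw [hPdef]
    intro y hy
    exact ((continuousAt_const.mul ((hφcont.continuousAt).mul (hEc y hy))).sub
      (continuousAt_const.mul (hHc y hy))).continuousWithinAt
  set v : ℝ → ℝ := fun y => max (-P y) 0 with hvdef
  have hvcont : ContinuousOn v (Ioo (0:ℝ) 1) := by
    rw [hvdef]
    intro y hy
    exact ContinuousWithinAt.sup (hPcont y hy).neg continuousWithinAt_const
  have hvnn : ∀ y, 0 ≤ v y := fun y => le_max_right _ _
  -- the function m and its bound
  set m : ℝ → ℝ := fun t => C + n / t + 2 * E t / H t with hmdef
  have hmcont : ContinuousOn m (Icc a b) := by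
    rw [hmdef]
    refine (continuousOn_const.add (continuousOn_const.div continuousOn_id fun t ht => ?_)).add
      (((continuousOn_const.mul hEcont).div hHcont) fun t ht => ?_)
    · exact ne_of_gt (ha.1.trans_le ht.1)
    · exact ne_of_gt (hH_pos t (hsub ht))
  obtain ⟨M₀, hM₀⟩ := isCompact_Icc.exists_bound_of_continuousOn hmcont
  set M : ℝ := max M₀ 0 with hMdef
  have hM0 : 0 ≤ M := le_max_right _ _
  have hmM : ∀ t ∈ Icc a b, m t ≤ M := fun t ht =>
    le_trans (le_trans (le_abs_self _) (hM₀ t ht)) (le_max_left _ _)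
  have hmnn : ∀ t ∈ Icc a b, 0 ≤ m t := by
    intro t ht
    have ht' := hsub ht
    have h1 : 0 < n / t := div_pos (lt_of_lt_of_le one_pos hn) ht'.1
    have h2 : 0 ≤ 2 * E t / H t :=
      div_nonneg (by linarith [hE_nonneg t ht']) (hH_pos t ht').le
    simp only [hmdef]
    linarith
  -- a.e. inequality : p t ≥ m t * P t on Icc a b
  have hIccsub : Icc a b ⊆ Ioo (0:ℝ) 1 := hsub
  have hE'' : ∀ᵐ t ∂(volume.restrict (Icc a b)),
      E' t ≥ -C * E t + ((n - 1) / t) * E t + 2 * F t :=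
    ae_restrict_of_ae_restrict_of_subset hIccsub hE'
  have hH'' : ∀ᵐ t ∂(volume.restrict (Icc a b)),
      |H' t - (n / t) * H t - 2 * E t| ≤ C * H t :=
    ae_restrict_of_ae_restrict_of_subset hIccsub hH'
  have hm_ae : ∀ᵐ t ∂(volume.restrict (Icc a b)), m t * P t ≤ p t := by
    filter_upwards [hE'', hH'', ae_restrict_mem measurableSet_Icc] with t h1 h2 ht
    have ht' : t ∈ Ioo (0:ℝ) 1 := hsub ht
    have hpw := pw_ineq C n t (Real.exp (2 * C * t)) (H a) μ (E t) (H t) (E' t) (H' t) (F t)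
      ht'.1 (Real.exp_pos _) hHapos hμ (hE_nonneg t ht') (hH_pos t ht') h1 h2 (hCS t ht')
    simp only [hpdef, hPdef, hmdef, hφdef, hφ'def]
    exact hpw
  have hp_ae : ∀ᵐ t ∂(volume.restrict (Icc a b)), -(M * v t) ≤ p t := by
    filter_upwards [hm_ae, ae_restrict_mem measurableSet_Icc] with t h1 ht
    rcases le_or_gt 0 (P t) with hP | hP
    · have hv : v t = 0 := by simp only [hvdef]; simp [max_eq_right, neg_nonpos.mpr hP]
      rw [hv, mul_zero, neg_zero]
      exact le_trans (mul_nonneg (hmnn t ht) hP) h1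
    · have hv : v t = -P t := by
        simp only [hvdef]; exact max_eq_left (by linarith)
      rw [hv]
      have : M * P t ≤ m t * P t := mul_le_mul_of_nonpos_right (hmM t ht) hP.le
      calc -(M * -P t) = M * P t := by ring
        _ ≤ m t * P t := this
        _ ≤ p t := h1
  -- define u and prove v ≤ M * u
  set u : ℝ → ℝ := fun y => ∫ t in a..y, v t with hudef
  have hvint : ∀ y ∈ Icc a b, IntervalIntegrable v volume a y := by
    intro y hy
    apply ContinuousOn.intervalIntegrable
    apply hvcont.mono
    rw [uIcc_of_le hy.1]
    exact fun z hz => hsub ⟨hz.1, hz.2.trans hy.2⟩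
  have hMv_int : ∀ y ∈ Icc a b, IntervalIntegrable (fun t => -(M * v t)) volume a y := by
    intro y hy
    exact (((hvint y hy).const_mul M).neg)
  have h_neg : ∀ y ∈ Icc a b, -P y ≤ M * u y := by
    intro y hy
    have hmono : (∫ t in a..y, -(M * v t)) ≤ ∫ t in a..y, p t := by
      refine intervalIntegral.integral_mono_ae_restrict hy.1 (hMv_int y hy)
        (hpintb.mono_set ?_) ?_
      · rw [huIcc, uIcc_of_le hy.1]; exact Icc_subset_Icc le_rfl hy.2
      · exact ae_restrict_of_ae_restrict_of_subset (Icc_subset_Icc le_rfl hy.2) hp_ae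
    have e2 : (∫ t in a..y, -(M * v t)) = -(M * u y) := by
      rw [intervalIntegral.integral_neg, intervalIntegral.integral_const_mul, hudef]
    rw [← hPftc y hy, e2] at hmono
    linarith
  have h_u_nonneg : ∀ y ∈ Icc a b, 0 ≤ u y := by
    intro y hy
    rw [hudef]
    exact intervalIntegral.integral_nonneg hy.1 fun t _ => hvnn t
  have hvu : ∀ y ∈ Icc a b, v y ≤ M * u y := by
    intro y hy
    refine max_le (h_neg y hy) (mul_nonneg hM0 (h_u_nonneg y hy))
  -- Gronwall: u ≡ 0 hence P ≥ 0
  have hud : ∀ y ∈ Ioo a b, HasDerivAt u (v y) y := by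
    intro y hy
    have hy' : y ∈ Ioo (0:ℝ) 1 := hsub ⟨hy.1.le, hy.2.le⟩
    exact intervalIntegral.integral_hasDerivAt_right (hvint y ⟨hy.1.le, hy.2.le⟩)
      (hvcont.stronglyMeasurableAtFilter isOpen_Ioo y hy')
      (hvcont.continuousAt (isOpen_Ioo.mem_nhds hy'))
  set w : ℝ → ℝ := fun y => Real.exp (-M * y) * u y with hwdef
  have hwd : ∀ y ∈ Ioo a b, HasDerivAt w
      ((Real.exp (-M * y) * (-M * 1)) * u y + Real.exp (-M * y) * v y) y := by
    intro y hy
    exact (((hasDerivAt_id y).const_mul (-M)).exp).mul (hud y hy)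
  have hucont : ContinuousOn u (Icc a b) := by
    rw [hudef]
    have := continuousOn_primitive_interval' (hvint b ⟨hab, le_rfl⟩)
      (a := a) (by rw [huIcc]; exact ⟨le_rfl, hab⟩)
    rwa [huIcc] at this
  have hwcont : ContinuousOn w (Icc a b) := by
    rw [hwdef]
    exact ((Real.continuous_exp.comp (continuous_const.mul continuous_id)).continuousOn).mul hucont
  have hwanti : AntitoneOn w (Icc a b) := by
    refine antitoneOn_of_deriv_nonpos (convex_Icc a b) hwcont ?_ ?_
    · intro y hy
      rw [interior_Icc] at hy
      exact (hwd y hy).differentiableAt.differentiableWithinAt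
    · intro y hy
      rw [interior_Icc] at hy
      rw [(hwd y hy).deriv]
      have h1 := hvu y ⟨hy.1.le, hy.2.le⟩
      have h2 := h_u_nonneg y ⟨hy.1.le, hy.2.le⟩
      have h3 := Real.exp_pos (-M * y)
      nlinarith
  have hwab : w b ≤ w a := hwanti ⟨le_rfl, hab⟩ ⟨hab, le_rfl⟩ hab
  have hua : u a = 0 := by rw [hudef]; exact intervalIntegral.integral_same
  have hub : u b = 0 := by
    have h1 : Real.exp (-M * b) * u b ≤ Real.exp (-M * a) * u a := hwab
    rw [hua, mul_zero] at h1
    have h2 := h_u_nonneg b ⟨hab, le_rfl⟩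
    have h3 := Real.exp_pos (-M * b)
    nlinarith
  have hPb : 0 ≤ P b := by
    have := h_neg b ⟨hab, le_rfl⟩
    rw [hub, mul_zero] at this
    linarith
  -- conclude
  have hHbpos : 0 < H b := hH_pos b hb
  have hkey : φ a * E a * H b ≤ φ b * E b * H a := by
    have : μ * H b ≤ H a * (φ b * E b) := by
      simp only [hPdef] at hPb; linarith
    rw [hμdef] at this; linarith [this]
  have e3 : ∀ y : ℝ, Real.exp (2 * C * y) * (y * E y / H y) = φ y * E y / H y := by
    intro y; simp only [hφdef]; ring
  rw [e3 a, e3 b, div_le_div_iff₀ hHapos hHbpos]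
  exact hkey

/-- Abstract quasi-monotonicity of the energy-driven frequency: if `E ≥ 0` is
locally absolutely continuous on `(0,1)` with `E'(r) ≥ −C E(r) + ((n−1)/r) E(r) + 2 F(r)` a.e.
(`F ≥ 0`), `H > 0` is locally absolutely continuous with `|H'(r) − (n/r)H(r) − 2E(r)| ≤ C H(r)`
a.e., and the Cauchy–Schwarz inequality `2 H(r) F(r) ≥ 2 E(r)²` holds, then for some `C' > 0`
(depending only on `C`) the frequency `I(r) = r E(r)/H(r)` satisfies `I' ≥ −C' I` wherever it is
differentiable, and `r ↦ e^{C'r} I(r)` is nondecreasing on `(0,1)`. -/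
theorem stmt19 (C n : ℝ) (hC : 0 < C) (hn : 1 ≤ n)
    (E E' F H H' : ℝ → ℝ)
    (hE_nonneg : ∀ r ∈ Set.Ioo (0 : ℝ) 1, 0 ≤ E r)
    (hF_nonneg : ∀ r ∈ Set.Ioo (0 : ℝ) 1, 0 ≤ F r)
    (hH_pos : ∀ r ∈ Set.Ioo (0 : ℝ) 1, 0 < H r)
    (hE_int : ∀ a ∈ Set.Ioo (0 : ℝ) 1, ∀ b ∈ Set.Ioo (0 : ℝ) 1,
      IntervalIntegrable E' volume a b)
    (hE_ftc : ∀ a ∈ Set.Ioo (0 : ℝ) 1, ∀ b ∈ Set.Ioo (0 : ℝ) 1,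
      E b - E a = ∫ r in a..b, E' r)
    (hH_int : ∀ a ∈ Set.Ioo (0 : ℝ) 1, ∀ b ∈ Set.Ioo (0 : ℝ) 1,
      IntervalIntegrable H' volume a b)
    (hH_ftc : ∀ a ∈ Set.Ioo (0 : ℝ) 1, ∀ b ∈ Set.Ioo (0 : ℝ) 1,
      H b - H a = ∫ r in a..b, H' r)
    (hE' : ∀ᵐ r ∂(volume.restrict (Set.Ioo (0 : ℝ) 1)),
      E' r ≥ -C * E r + ((n - 1) / r) * E r + 2 * F r)
    (hH' : ∀ᵐ r ∂(volume.restrict (Set.Ioo (0 : ℝ) 1)),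
      |H' r - (n / r) * H r - 2 * E r| ≤ C * H r)
    (hCS : ∀ r ∈ Set.Ioo (0 : ℝ) 1, 2 * H r * F r ≥ 2 * (E r) ^ 2) :
    ∃ C' > (0 : ℝ),
      (∀ r ∈ Set.Ioo (0 : ℝ) 1, ∀ I' : ℝ,
        HasDerivAt (fun s => s * E s / H s) I' r → I' ≥ -C' * (r * E r / H r)) ∧
      MonotoneOn (fun r => Real.exp (C' * r) * (r * E r / H r)) (Set.Ioo (0 : ℝ) 1) := by

  have hmono := freq_mono C n hC hn E E' F H H' hE_nonneg hF_nonneg hH_pos hE_int hE_ftc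
    hH_int hH_ftc hE' hH' hCS
  refine ⟨2 * C, by linarith, ?_, hmono⟩
  intro r hr I' hI'
  set G : ℝ → ℝ := fun s => Real.exp (2 * C * s) * (s * E s / H s) with hGdef
  have hexp : HasDerivAt (fun s : ℝ => Real.exp (2 * C * s))
      (Real.exp (2 * C * r) * (2 * C * 1)) r :=
    ((hasDerivAt_id r).const_mul (2 * C)).exp
  have hG : HasDerivAt G
      ((Real.exp (2 * C * r) * (2 * C * 1)) * (r * E r / H r) + Real.exp (2 * C * r) * I') r :=
    hexp.mul hI'
  have hd : 0 ≤ (Real.exp (2 * C * r) * (2 * C * 1)) * (r * E r / H r)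
      + Real.exp (2 * C * r) * I' := by
    have htend := hasDerivAt_iff_tendsto_slope.mp hG
    have htend' : Filter.Tendsto (slope G r) (nhdsWithin r (Set.Ioi r))
        (nhds ((Real.exp (2 * C * r) * (2 * C * 1)) * (r * E r / H r)
          + Real.exp (2 * C * r) * I')) :=
      htend.mono_left (nhdsWithin_mono r fun y hy => ne_of_gt hy)
    refine ge_of_tendsto htend' ?_
    filter_upwards [Ioo_mem_nhdsGT_of_mem (⟨le_rfl, hr.2⟩ : r ∈ Ico r 1)] with y hy
    have hy' : y ∈ Ioo (0:ℝ) 1 := ⟨hr.1.trans hy.1, hy.2⟩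
    have hle : G r ≤ G y := hmono hr hy' hy.1.le
    rw [slope_def_field]
    have : 0 < y - r := by linarith [hy.1]
    apply div_nonneg (by linarith) this.le
  have hexppos := Real.exp_pos (2 * C * r)
  nlinarith [hd]
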